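/- For any permutation σ of [n]: (a) if i is a cycle valley or cycle double rise (i.e. σ(i)>i), then i is a record if and only if unest(i,σ)=0, where unest(i,σ) = #{(h,k,l) : h<i<k<l, k=σ(i), l=σ(h)}; and in that case i is an exclusive record (a record that is not an antirecord). -/

import Mathlib

open Finset

def fixCt {n : ℕ} (σ : Equiv.Perm (Fin n)) : ℕ :=
  (univ.filter fun i => σ i = i).card

def cpeakCt {n : ℕ} (σ : Equiv.Perm (Fin n)) : ℕ :=
  (univ.filter fun i => σ⁻¹ i < i ∧ σ i < i).card

def cvalCt {n : ℕ} (σ : Equiv.Perm (Fin n)) : ℕ :=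
  (univ.filter fun i => i < σ⁻¹ i ∧ i < σ i).card

def cdriseCt {n : ℕ} (σ : Equiv.Perm (Fin n)) : ℕ :=
  (univ.filter fun i => σ⁻¹ i < i ∧ i < σ i).card

def cdfallCt {n : ℕ} (σ : Equiv.Perm (Fin n)) : ℕ :=
  (univ.filter fun i => i < σ⁻¹ i ∧ σ i < i).card

def ucrossCt {n : ℕ} (σ : Equiv.Perm (Fin n)) : ℕ :=
  (univ.filter fun p : Fin n × Fin n × Fin n × Fin n =>
    p.1 < p.2.1 ∧ p.2.1 < p.2.2.1 ∧ p.2.2.1 < p.2.2.2 ∧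
    p.2.2.1 = σ p.1 ∧ p.2.2.2 = σ p.2.1).card

def lcrossCt {n : ℕ} (σ : Equiv.Perm (Fin n)) : ℕ :=
  (univ.filter fun p : Fin n × Fin n × Fin n × Fin n =>
    p.1 < p.2.1 ∧ p.2.1 < p.2.2.1 ∧ p.2.2.1 < p.2.2.2 ∧
    p.1 = σ p.2.2.1 ∧ p.2.1 = σ p.2.2.2).card

def unestCt {n : ℕ} (σ : Equiv.Perm (Fin n)) : ℕ :=
  (univ.filter fun p : Fin n × Fin n × Fin n × Fin n =>
    p.1 < p.2.1 ∧ p.2.1 < p.2.2.1 ∧ p.2.2.1 < p.2.2.2 ∧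
    p.2.2.2 = σ p.1 ∧ p.2.2.1 = σ p.2.1).card

def lnestCt {n : ℕ} (σ : Equiv.Perm (Fin n)) : ℕ :=
  (univ.filter fun p : Fin n × Fin n × Fin n × Fin n =>
    p.1 < p.2.1 ∧ p.2.1 < p.2.2.1 ∧ p.2.2.1 < p.2.2.2 ∧
    p.1 = σ p.2.2.2 ∧ p.2.1 = σ p.2.2.1).card

def psnestCt {n : ℕ} (σ : Equiv.Perm (Fin n)) : ℕ :=
  (univ.filter fun p : Fin n × Fin n × Fin n =>
    p.1 < p.2.1 ∧ p.2.1 < p.2.2 ∧ σ p.2.1 = p.2.1 ∧ σ p.1 = p.2.2).card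

def invCt {n : ℕ} (σ : Equiv.Perm (Fin n)) : ℕ :=
  (univ.filter fun p : Fin n × Fin n => p.1 < p.2 ∧ σ p.2 < σ p.1).card

/-- Number of cycles of a permutation, counting fixed points as cycles. -/
def cycCt {n : ℕ} (σ : Equiv.Perm (Fin n)) : ℕ :=
  σ.cycleType.card + fixCt σ

def ucrossAt {n : ℕ} (σ : Equiv.Perm (Fin n)) (j : Fin n) : ℕ :=
  (univ.filter fun p : Fin n × Fin n × Fin n =>
    p.1 < j ∧ j < p.2.1 ∧ p.2.1 < p.2.2 ∧ p.2.1 = σ p.1 ∧ p.2.2 = σ j).card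

def unestAt {n : ℕ} (σ : Equiv.Perm (Fin n)) (j : Fin n) : ℕ :=
  (univ.filter fun p : Fin n × Fin n × Fin n =>
    p.1 < j ∧ j < p.2.1 ∧ p.2.1 < p.2.2 ∧ p.2.1 = σ j ∧ p.2.2 = σ p.1).card

def lcrossAt {n : ℕ} (σ : Equiv.Perm (Fin n)) (k : Fin n) : ℕ :=
  (univ.filter fun p : Fin n × Fin n × Fin n =>
    p.1 < p.2.1 ∧ p.2.1 < k ∧ k < p.2.2 ∧ p.1 = σ k ∧ p.2.1 = σ p.2.2).card

def lnestAt {n : ℕ} (σ : Equiv.Perm (Fin n)) (k : Fin n) : ℕ :=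
  (univ.filter fun p : Fin n × Fin n × Fin n =>
    p.1 < p.2.1 ∧ p.2.1 < k ∧ k < p.2.2 ∧ p.1 = σ p.2.2 ∧ p.2.1 = σ k).card

/-- `i` is a record (left-to-right maximum) of `σ`. -/
def IsRecord {n : ℕ} (σ : Equiv.Perm (Fin n)) (i : Fin n) : Prop :=
  ∀ j, j < i → σ j < σ i

/-- `i` is an antirecord (right-to-left minimum) of `σ`. -/
def IsAntirecord {n : ℕ} (σ : Equiv.Perm (Fin n)) (i : Fin n) : Prop :=
  ∀ j, i < j → σ i < σ j

def ujoinCt {n : ℕ} (σ : Equiv.Perm (Fin n)) : ℕ :=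
  (univ.filter fun p : Fin n × Fin n × Fin n =>
    p.1 < p.2.1 ∧ p.2.1 < p.2.2 ∧ p.2.1 = σ p.1 ∧ p.2.2 = σ p.2.1).card

def ljoinCt {n : ℕ} (σ : Equiv.Perm (Fin n)) : ℕ :=
  (univ.filter fun p : Fin n × Fin n × Fin n =>
    p.1 < p.2.1 ∧ p.2.1 < p.2.2 ∧ p.1 = σ p.2.1 ∧ p.2.1 = σ p.2.2).card

theorem record_iff_unest_eq_zero {n : ℕ} (σ : Equiv.Perm (Fin n)) (i : Fin n)
    (hi : i < σ i) :
    (IsRecord σ i ↔ unestAt σ i = 0) ∧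
    (IsRecord σ i → IsRecord σ i ∧ ¬ IsAntirecord σ i) := by
  have hmain : IsRecord σ i ↔ unestAt σ i = 0 := by
    rw [unestAt, Finset.card_eq_zero, Finset.filter_eq_empty_iff]
    constructor
    · rintro hrec p - ⟨h1, h2, h3, h4, h5⟩
      have h6 := hrec p.1 h1
      rw [← h5] at h6
      rw [h4] at h3
      exact absurd h3 (lt_asymm h6)
    · intro h0 j hj
      rcases lt_trichotomy (σ j) (σ i) with h | h | h
      · exact h
      · exact absurd (σ.injective h) (ne_of_lt hj)
      · exact absurd (h0 (Finset.mem_univ ((j, σ i, σ j) : Fin n × Fin n × Fin n)) ⟨hj, hi, h, rfl, rfl⟩) not_false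
  refine ⟨hmain, fun hrec => ⟨hrec, fun hanti => ?_⟩⟩
  have hcard : (Finset.Ioi i).card ≤ (Finset.Ioi (σ i)).card := by
    apply Finset.card_le_card_of_injOn σ
    · intro j hj
      rw [Finset.mem_coe, Finset.mem_Ioi] at hj ⊢
      exact hanti j hj
    · exact σ.injective.injOn
  rw [Fin.card_Ioi, Fin.card_Ioi] at hcard
  have h1 : (i : ℕ) < (σ i : ℕ) := hi
  have h2 : (σ i : ℕ) < n := (σ i).isLt
  omega
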